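/- For any two multigraphons h1, h2 and any multigraph F on k vertices with adjacency matrix (a_{ij}), the homomorphism densities satisfy |t_F(h1) - t_F(h2)| ≤ Σ_{1≤i<j≤k} ∫_{[0,1]²} |h1^{≥a_{ij}}(x,y) - h2^{≥a_{ij}}(x,y)| dx dy + Σ_{1≤i≤k} ∫_{[0,1]} |h1^{≥a_{ii}}(x,x) - h2^{≥a_{ii}}(x,x)| dx, where h^{≥r}(x,y) = Σ_{s≥r} h(s;x,y). -/

import Mathlib

open MeasureTheory Set

/-- The uniform measure on `[0,1]`. -/
noncomputable def unif : Measure ℝ := volume.restrict (Icc (0:ℝ) 1)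

/-- `h` is a multigraphon. -/
def IsMultigraphon (h : ℕ → ℝ → ℝ → ℝ) : Prop :=
  (∀ r, Measurable fun p : ℝ × ℝ => h r p.1 p.2) ∧
  (∀ r, Integrable (fun p : ℝ × ℝ => h r p.1 p.2) (unif.prod unif)) ∧
  (∀ r, Integrable (fun x : ℝ => h r x x) unif) ∧
  (∀ r x y, 0 ≤ h r x y ∧ h r x y ≤ 1) ∧
  (∀ r x y, h r x y = h r y x) ∧
  (∀ x y, ∑' r : ℕ, h r x y = 1) ∧
  (∀ r x, h (2 * r + 1) x x = 0)

/-- Tail sum `h^{≥ r}(x,y) = ∑_{s ≥ r} h(s;x,y)`. -/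
noncomputable def tailSum (h : ℕ → ℝ → ℝ → ℝ) (r : ℕ) (x y : ℝ) : ℝ :=
  ∑' s : ℕ, if r ≤ s then h s x y else 0

/-- Homomorphism density of the multigraph with adjacency matrix `a` in the
multigraphon `h`. -/
noncomputable def tDensity {k : ℕ} (a : Fin k → Fin k → ℕ) (h : ℕ → ℝ → ℝ → ℝ) : ℝ :=
  ∫ x : Fin k → ℝ,
    (∏ i, ∏ j, if i ≤ j then tailSum h (a i j) (x i) (x j) else 1)
      ∂(Measure.pi fun _ : Fin k => unif)

instance : IsProbabilityMeasure unif := by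
  constructor
  simp [unif, Real.volume_Icc]

lemma summable_aux (h : ℕ → ℝ → ℝ → ℝ) (h0 : ∀ r x y, 0 ≤ h r x y ∧ h r x y ≤ 1)
    (h1 : ∀ x y, ∑' r : ℕ, h r x y = 1) (r : ℕ) (x y : ℝ) :
    Summable (fun s => if r ≤ s then h s x y else 0) := by
  have hsum : Summable (fun s => h s x y) := by
    by_contra hc
    have := tsum_eq_zero_of_not_summable hc
    rw [h1 x y] at this
    norm_num at this
  apply Summable.of_nonneg_of_le _ _ hsum
  · intro s; by_cases hrs : r ≤ s <;> simp [hrs, (h0 s x y).1]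
  · intro s; by_cases hrs : r ≤ s <;> simp [hrs, (h0 s x y).1]

lemma tail_meas (h : ℕ → ℝ → ℝ → ℝ) (hm : ∀ r, Measurable fun p : ℝ × ℝ => h r p.1 p.2)
    (h0 : ∀ r x y, 0 ≤ h r x y ∧ h r x y ≤ 1) (h1 : ∀ x y, ∑' r : ℕ, h r x y = 1)
    (r : ℕ) : Measurable fun p : ℝ × ℝ => tailSum h r p.1 p.2 := by
  have key : ∀ p : ℝ × ℝ, Filter.Tendsto
      (fun n => ∑ s ∈ Finset.range n, if r ≤ s then h s p.1 p.2 else 0)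
      Filter.atTop (nhds (tailSum h r p.1 p.2)) := by
    intro p
    exact (summable_aux h h0 h1 r p.1 p.2).hasSum.tendsto_sum_nat
  apply measurable_of_tendsto_metrizable (f := fun n p =>
    ∑ s ∈ Finset.range n, if r ≤ s then h s p.1 p.2 else 0)
  · intro n
    apply Finset.measurable_sum
    intro s _
    by_cases hrs : r ≤ s
    · simpa [hrs] using hm s
    · simp [hrs]
  · exact tendsto_pi_nhds.2 key

lemma tail_nonneg (h : ℕ → ℝ → ℝ → ℝ) (h0 : ∀ r x y, 0 ≤ h r x y ∧ h r x y ≤ 1)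
    (r : ℕ) (x y : ℝ) : 0 ≤ tailSum h r x y := by
  apply tsum_nonneg
  intro s
  by_cases hrs : r ≤ s <;> simp [hrs, (h0 s x y).1]

lemma tail_le_one (h : ℕ → ℝ → ℝ → ℝ) (h0 : ∀ r x y, 0 ≤ h r x y ∧ h r x y ≤ 1)
    (h1 : ∀ x y, ∑' r : ℕ, h r x y = 1) (r : ℕ) (x y : ℝ) : tailSum h r x y ≤ 1 := by
  calc tailSum h r x y ≤ ∑' s, h s x y := by
        apply Summable.tsum_le_tsum _ (summable_aux h h0 h1 r x y) ?_
        · intro s; by_cases hrs : r ≤ s <;> simp [hrs, (h0 s x y).1]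
        · by_contra hc
          have := tsum_eq_zero_of_not_summable hc
          rw [h1 x y] at this
          norm_num at this
    _ = 1 := h1 x y

lemma prod_diff_le {ι : Type*} [DecidableEq ι] (s : Finset ι) (f g : ι → ℝ)
    (hf0 : ∀ i, 0 ≤ f i) (hf1 : ∀ i, f i ≤ 1) (hg0 : ∀ i, 0 ≤ g i) (hg1 : ∀ i, g i ≤ 1) :
    |∏ i ∈ s, f i - ∏ i ∈ s, g i| ≤ ∑ i ∈ s, |f i - g i| := by
  induction s using Finset.induction with
  | empty => simp
  | insert _ _ hx ih =>
    rename_i a t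
    rw [Finset.prod_insert hx, Finset.prod_insert hx, Finset.sum_insert hx]
    have hPf0 : 0 ≤ ∏ i ∈ t, f i := Finset.prod_nonneg fun i _ => hf0 i
    have hPf1 : ∏ i ∈ t, f i ≤ 1 := Finset.prod_le_one (fun i _ => hf0 i) (fun i _ => hf1 i)
    calc |f a * ∏ i ∈ t, f i - g a * ∏ i ∈ t, g i|
        ≤ |f a * ∏ i ∈ t, f i - g a * ∏ i ∈ t, f i|
          + |g a * ∏ i ∈ t, f i - g a * ∏ i ∈ t, g i| := by
          apply abs_sub_le
      _ = |f a - g a| * |∏ i ∈ t, f i| + |g a| * |∏ i ∈ t, f i - ∏ i ∈ t, g i| := by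
          rw [← sub_mul, ← mul_sub, abs_mul, abs_mul]
      _ ≤ |f a - g a| * 1 + 1 * |∏ i ∈ t, f i - ∏ i ∈ t, g i| := by
          gcongr
          · rw [abs_of_nonneg hPf0]; exact hPf1
          · rw [abs_of_nonneg (hg0 a)]; exact hg1 a
      _ ≤ |f a - g a| + ∑ i ∈ t, |f i - g i| := by
          rw [mul_one, one_mul]; gcongr

lemma meas_comp_pair {k : ℕ} {f : ℝ × ℝ → ℝ} (hf : Measurable f) (i j : Fin k) :
    Measurable fun x : Fin k → ℝ => f (x i, x j) :=
  hf.comp ((measurable_pi_apply i).prodMk (measurable_pi_apply j))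

lemma map_eval {k : ℕ} (i : Fin k) :
    (Measure.pi fun _ : Fin k => unif).map (fun x => x i) = unif := by
  ext s hs
  rw [Measure.map_apply (measurable_pi_apply i) hs]
  have : (fun x : Fin k → ℝ => x i) ⁻¹' s
      = Set.pi univ (Function.update (fun _ => univ) i s) := Set.eval_preimage
  rw [this, Measure.pi_pi]
  rw [Finset.prod_eq_single i]
  · simp
  · intro j _ hj
    simp [Function.update_of_ne hj]
  · simp

lemma map_pair {k : ℕ} {i j : Fin k} (hij : i ≠ j) :
    (Measure.pi fun _ : Fin k => unif).map (fun x => (x i, x j)) = unif.prod unif := by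
  refine (Measure.prod_eq ?_).symm
  intro s t hs ht
  rw [Measure.map_apply (by fun_prop) (hs.prod ht)]
  have hpre : (fun x : Fin k → ℝ => (x i, x j)) ⁻¹' (s ×ˢ t)
      = Set.pi univ (fun l => if l = i then s else if l = j then t else univ) := by
    ext x
    simp only [mem_preimage, mem_prod, Set.mem_pi, mem_univ, forall_true_left]
    constructor
    · rintro ⟨h1, h2⟩ l
      by_cases hli : l = i
      · subst hli; simpa
      · by_cases hlj : l = j
        · subst hlj; simpa [hli]
        · simp [hli, hlj]
    · intro hl
      have h1 := hl i
      have h2 := hl j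
      rw [if_pos rfl] at h1
      rw [if_neg hij.symm, if_pos rfl] at h2
      exact ⟨h1, h2⟩
  rw [hpre, Measure.pi_pi]
  have : ∀ l : Fin k, l ∉ ({i, j} : Finset (Fin k)) →
      unif (if l = i then s else if l = j then t else univ) = 1 := by
    intro l hl
    simp only [Finset.mem_insert, Finset.mem_singleton, not_or] at hl
    simp [hl.1, hl.2]
  rw [← Finset.prod_subset (Finset.subset_univ {i, j}) (fun l _ hl => this l hl)]
  rw [Finset.prod_pair hij]
  simp [hij.symm]

theorem stmt_1 {k : ℕ} (a : Fin k → Fin k → ℕ)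
    (h1 h2 : ℕ → ℝ → ℝ → ℝ) (hh1 : IsMultigraphon h1) (hh2 : IsMultigraphon h2) :
    |tDensity a h1 - tDensity a h2| ≤
      (∑ i : Fin k, ∑ j : Fin k, if i < j then
          ∫ p : ℝ × ℝ, |tailSum h1 (a i j) p.1 p.2 - tailSum h2 (a i j) p.1 p.2|
            ∂(unif.prod unif) else 0) +
      ∑ i : Fin k, ∫ x : ℝ, |tailSum h1 (a i i) x x - tailSum h2 (a i i) x x| ∂unif := by
  obtain ⟨hm1, -, -, h01, -, hs1, -⟩ := hh1
  obtain ⟨hm2, -, -, h02, -, hs2, -⟩ := hh2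
  set μ : Measure (Fin k → ℝ) := Measure.pi fun _ : Fin k => unif with hμ
  have hmt1 : ∀ r, Measurable fun p : ℝ × ℝ => tailSum h1 r p.1 p.2 :=
    tail_meas h1 hm1 h01 hs1
  have hmt2 : ∀ r, Measurable fun p : ℝ × ℝ => tailSum h2 r p.1 p.2 :=
    tail_meas h2 hm2 h02 hs2
  set F1 : (Fin k → ℝ) → ℝ :=
    fun x => ∏ i, ∏ j, if i ≤ j then tailSum h1 (a i j) (x i) (x j) else 1 with hF1
  set F2 : (Fin k → ℝ) → ℝ :=
    fun x => ∏ i, ∏ j, if i ≤ j then tailSum h2 (a i j) (x i) (x j) else 1 with hF2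
  -- measurability of factors
  have hfac1 : ∀ i j : Fin k, Measurable fun x : Fin k → ℝ =>
      (if i ≤ j then tailSum h1 (a i j) (x i) (x j) else 1) := by
    intro i j
    by_cases hij : i ≤ j
    · simp only [if_pos hij]
      exact meas_comp_pair (hmt1 (a i j)) i j
    · simp only [if_neg hij]; exact measurable_const
  have hfac2 : ∀ i j : Fin k, Measurable fun x : Fin k → ℝ =>
      (if i ≤ j then tailSum h2 (a i j) (x i) (x j) else 1) := by
    intro i j
    by_cases hij : i ≤ j
    · simp only [if_pos hij]
      exact meas_comp_pair (hmt2 (a i j)) i j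
    · simp only [if_neg hij]; exact measurable_const
  have hF1m : Measurable F1 :=
    Finset.measurable_prod _ fun i _ => Finset.measurable_prod _ fun j _ => hfac1 i j
  have hF2m : Measurable F2 :=
    Finset.measurable_prod _ fun i _ => Finset.measurable_prod _ fun j _ => hfac2 i j
  have hfac1b : ∀ (i j : Fin k) (x : Fin k → ℝ),
      0 ≤ (if i ≤ j then tailSum h1 (a i j) (x i) (x j) else 1) ∧
      (if i ≤ j then tailSum h1 (a i j) (x i) (x j) else 1) ≤ 1 := by
    intro i j x
    by_cases hij : i ≤ j <;>
      simp [hij, tail_nonneg h1 h01, tail_le_one h1 h01 hs1]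
  have hfac2b : ∀ (i j : Fin k) (x : Fin k → ℝ),
      0 ≤ (if i ≤ j then tailSum h2 (a i j) (x i) (x j) else 1) ∧
      (if i ≤ j then tailSum h2 (a i j) (x i) (x j) else 1) ≤ 1 := by
    intro i j x
    by_cases hij : i ≤ j <;>
      simp [hij, tail_nonneg h2 h02, tail_le_one h2 h02 hs2]
  have hF1b : ∀ x, 0 ≤ F1 x ∧ F1 x ≤ 1 := by
    intro x
    constructor
    · exact Finset.prod_nonneg fun i _ => Finset.prod_nonneg fun j _ => (hfac1b i j x).1
    · exact Finset.prod_le_one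
        (fun i _ => Finset.prod_nonneg fun j _ => (hfac1b i j x).1)
        (fun i _ => Finset.prod_le_one (fun j _ => (hfac1b i j x).1)
          (fun j _ => (hfac1b i j x).2))
  have hF2b : ∀ x, 0 ≤ F2 x ∧ F2 x ≤ 1 := by
    intro x
    constructor
    · exact Finset.prod_nonneg fun i _ => Finset.prod_nonneg fun j _ => (hfac2b i j x).1
    · exact Finset.prod_le_one
        (fun i _ => Finset.prod_nonneg fun j _ => (hfac2b i j x).1)
        (fun i _ => Finset.prod_le_one (fun j _ => (hfac2b i j x).1)
          (fun j _ => (hfac2b i j x).2))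
  have hint1 : Integrable F1 μ := by
    apply (integrable_const (1:ℝ)).mono' hF1m.aestronglyMeasurable
    filter_upwards with x
    rw [Real.norm_eq_abs, abs_of_nonneg (hF1b x).1]
    exact (hF1b x).2
  have hint2 : Integrable F2 μ := by
    apply (integrable_const (1:ℝ)).mono' hF2m.aestronglyMeasurable
    filter_upwards with x
    rw [Real.norm_eq_abs, abs_of_nonneg (hF2b x).1]
    exact (hF2b x).2
  -- the summands
  set S : Fin k → Fin k → (Fin k → ℝ) → ℝ := fun i j x =>
    if i ≤ j then |tailSum h1 (a i j) (x i) (x j) - tailSum h2 (a i j) (x i) (x j)| else 0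
    with hS
  have hSm : ∀ i j, Measurable (S i j) := by
    intro i j
    by_cases hij : i ≤ j
    · simp only [hS, if_pos hij]
      exact ((meas_comp_pair (hmt1 (a i j)) i j).sub (meas_comp_pair (hmt2 (a i j)) i j)).abs
    · simp only [hS, if_neg hij]; exact measurable_const
  have hSb : ∀ i j x, 0 ≤ S i j x ∧ S i j x ≤ 2 := by
    intro i j x
    by_cases hij : i ≤ j
    · simp only [hS, if_pos hij]
      refine ⟨abs_nonneg _, ?_⟩
      have b1 := tail_nonneg h1 h01 (a i j) (x i) (x j)
      have b2 := tail_le_one h1 h01 hs1 (a i j) (x i) (x j)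
      have b3 := tail_nonneg h2 h02 (a i j) (x i) (x j)
      have b4 := tail_le_one h2 h02 hs2 (a i j) (x i) (x j)
      rw [abs_sub_le_iff]
      constructor <;> linarith
    · simp [hS, hij]
  have hSint : ∀ i j, Integrable (S i j) μ := by
    intro i j
    apply (integrable_const (2:ℝ)).mono' (hSm i j).aestronglyMeasurable
    filter_upwards with x
    rw [Real.norm_eq_abs, abs_of_nonneg (hSb i j x).1]
    exact (hSb i j x).2
  -- pointwise bound
  have hpt : ∀ x, |F1 x - F2 x| ≤ ∑ i, ∑ j, S i j x := by
    intro x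
    have key := prod_diff_le (Finset.univ : Finset (Fin k × Fin k))
      (fun p => if p.1 ≤ p.2 then tailSum h1 (a p.1 p.2) (x p.1) (x p.2) else 1)
      (fun p => if p.1 ≤ p.2 then tailSum h2 (a p.1 p.2) (x p.1) (x p.2) else 1)
      (fun p => (hfac1b p.1 p.2 x).1) (fun p => (hfac1b p.1 p.2 x).2)
      (fun p => (hfac2b p.1 p.2 x).1) (fun p => (hfac2b p.1 p.2 x).2)
    rw [← Finset.univ_product_univ] at key
    simp only [Finset.prod_product, Finset.sum_product] at key
    refine le_trans key ?_
    apply le_of_eq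
    refine Finset.sum_congr rfl fun i _ => Finset.sum_congr rfl fun j _ => ?_
    by_cases hij : i ≤ j <;> simp [hS, hij]
  -- main chain
  have main : |tDensity a h1 - tDensity a h2| ≤ ∑ i, ∑ j, ∫ x, S i j x ∂μ := by
    have e1 : tDensity a h1 - tDensity a h2 = ∫ x, (F1 x - F2 x) ∂μ := by
      rw [integral_sub hint1 hint2]; rfl
    rw [e1]
    calc |∫ x, (F1 x - F2 x) ∂μ| ≤ ∫ x, |F1 x - F2 x| ∂μ := by
          simpa [Real.norm_eq_abs] using
            norm_integral_le_integral_norm (μ := μ) (fun x => F1 x - F2 x)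
      _ ≤ ∫ x, (∑ i, ∑ j, S i j x) ∂μ := by
          apply integral_mono (hint1.sub hint2).abs
          · exact integrable_finset_sum _ fun i _ =>
              integrable_finset_sum _ fun j _ => hSint i j
          · exact hpt
      _ = ∑ i, ∑ j, ∫ x, S i j x ∂μ := by
          rw [integral_finset_sum _ fun i _ =>
            integrable_finset_sum _ fun j _ => hSint i j]
          exact Finset.sum_congr rfl fun i _ =>
            integral_finset_sum _ fun j _ => hSint i j
  refine le_trans main (le_of_eq ?_)
  -- compute each integral
  have hterm : ∀ i j : Fin k, ∫ x, S i j x ∂μ =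
      (if i < j then
        ∫ p : ℝ × ℝ, |tailSum h1 (a i j) p.1 p.2 - tailSum h2 (a i j) p.1 p.2|
          ∂(unif.prod unif) else 0) +
      (if i = j then
        ∫ y : ℝ, |tailSum h1 (a i i) y y - tailSum h2 (a i i) y y| ∂unif else 0) := by
    intro i j
    rcases lt_trichotomy i j with hlt | heq | hgt
    · rw [if_pos hlt, if_neg hlt.ne, add_zero]
      have hfm : Measurable fun p : ℝ × ℝ =>
          |tailSum h1 (a i j) p.1 p.2 - tailSum h2 (a i j) p.1 p.2| :=
        ((hmt1 (a i j)).sub (hmt2 (a i j))).abs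
      rw [← map_pair hlt.ne]
      rw [integral_map (by fun_prop) hfm.aestronglyMeasurable]
      simp only [hS, if_pos hlt.le]
      rfl
    · subst heq
      rw [if_neg (lt_irrefl i), if_pos rfl, zero_add]
      have hfm : Measurable fun y : ℝ =>
          |tailSum h1 (a i i) y y - tailSum h2 (a i i) y y| := by
        have : Measurable fun y : ℝ => (y, y) := measurable_id.prodMk measurable_id
        exact (((hmt1 (a i i)).comp this).sub ((hmt2 (a i i)).comp this)).abs
      rw [← map_eval i]
      rw [integral_map (measurable_pi_apply i).aemeasurable hfm.aestronglyMeasurable]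
      simp only [hS, if_pos le_rfl]
      rfl
    · rw [if_neg (not_lt_of_gt hgt), if_neg hgt.ne', add_zero]
      have : S i j = fun _ => (0:ℝ) := by
        funext x; simp [hS, not_le_of_gt hgt]
      rw [this, integral_zero]
  calc ∑ i, ∑ j, ∫ x, S i j x ∂μ
      = ∑ i : Fin k, ∑ j : Fin k,
          ((if i < j then
            ∫ p : ℝ × ℝ, |tailSum h1 (a i j) p.1 p.2 - tailSum h2 (a i j) p.1 p.2|
              ∂(unif.prod unif) else 0) +
          (if i = j then
            ∫ y : ℝ, |tailSum h1 (a i i) y y - tailSum h2 (a i i) y y| ∂unif else 0)) :=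
        Finset.sum_congr rfl fun i _ => Finset.sum_congr rfl fun j _ => hterm i j
    _ = (∑ i : Fin k, ∑ j : Fin k, if i < j then
          ∫ p : ℝ × ℝ, |tailSum h1 (a i j) p.1 p.2 - tailSum h2 (a i j) p.1 p.2|
            ∂(unif.prod unif) else 0) +
        ∑ i : Fin k, ∫ x : ℝ, |tailSum h1 (a i i) x x - tailSum h2 (a i i) x x| ∂unif := by
        have hrow : ∀ i : Fin k, (∑ j : Fin k,
            ((if i < j then
              ∫ p : ℝ × ℝ, |tailSum h1 (a i j) p.1 p.2 - tailSum h2 (a i j) p.1 p.2|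
                ∂(unif.prod unif) else 0) +
            (if i = j then
              ∫ y : ℝ, |tailSum h1 (a i i) y y - tailSum h2 (a i i) y y| ∂unif else 0))) =
            (∑ j : Fin k, if i < j then
              ∫ p : ℝ × ℝ, |tailSum h1 (a i j) p.1 p.2 - tailSum h2 (a i j) p.1 p.2|
                ∂(unif.prod unif) else 0) +
            ∫ x : ℝ, |tailSum h1 (a i i) x x - tailSum h2 (a i i) x x| ∂unif := by
          intro i
          rw [Finset.sum_add_distrib]
          congr 1
          rw [Finset.sum_ite_eq]
          simp
        rw [Finset.sum_congr rfl fun i _ => hrow i, Finset.sum_add_distrib]
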